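/- arXiv:1304.6369 — 3 statements merged into one kernel-verified Lean document; each statement's English description precedes it below -/
import Mathlib

section
/- The functions G_1(Z) = R_1² - ‖(1+μ)X + μE‖² and G_2(Z) = R_2² - ‖(1+μ)X - E‖² are first integrals (Casimir functions) of the extended system: their gradients are annihilated by the structure matrix J(Z), i.e. J(Z)·∇G_i(Z) = 0 for i = 1,2, whenever R_1, R_2 ≠ 0 and G_1(Z) = G_2(Z) = 0. -/
open Matrix

/-- Coordinates of a point of the extended phase space ℝ⁶:
`Z = (X₁, X₂, P₁, P₂, R₁, R₂)`. -/
noncomputable def toE6 (Z : Fin 6 → ℝ) : EuclideanSpace ℝ (Fin 6) :=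
  (WithLp.equiv 2 (Fin 6 → ℝ)).symm Z

/-- The Casimir `G₁(Z) = R₁² - ‖(1+μ)X + μE‖²`. -/
noncomputable def G1fun (μ : ℝ) (W : EuclideanSpace ℝ (Fin 6)) : ℝ :=
  (WithLp.equiv 2 (Fin 6 → ℝ) W 4) ^ 2 -
    (((1 + μ) * WithLp.equiv 2 (Fin 6 → ℝ) W 0 + μ) ^ 2 +
      ((1 + μ) * WithLp.equiv 2 (Fin 6 → ℝ) W 1) ^ 2)

/-- The Casimir `G₂(Z) = R₂² - ‖(1+μ)X - E‖²`. -/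
noncomputable def G2fun (μ : ℝ) (W : EuclideanSpace ℝ (Fin 6)) : ℝ :=
  (WithLp.equiv 2 (Fin 6 → ℝ) W 5) ^ 2 -
    (((1 + μ) * WithLp.equiv 2 (Fin 6 → ℝ) W 0 - 1) ^ 2 +
      ((1 + μ) * WithLp.equiv 2 (Fin 6 → ℝ) W 1) ^ 2)

/-- The Poisson structure matrix `J(Z) = [[0, Id, 0],[-Id, 0, -A],[0, Aᵀ, 0]]`
with `A = (1+μ)[R⃗₁/R₁, R⃗₂/R₂]`. -/
noncomputable def Jstruct (μ : ℝ) (Z : Fin 6 → ℝ) : Matrix (Fin 6) (Fin 6) ℝ :=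
  let R1x := (1 + μ) * Z 0 + μ
  let R2x := (1 + μ) * Z 0 - 1
  let Ry := (1 + μ) * Z 1
  let A00 := (1 + μ) * R1x / Z 4
  let A10 := (1 + μ) * Ry / Z 4
  let A01 := (1 + μ) * R2x / Z 5
  let A11 := (1 + μ) * Ry / Z 5
  !![0, 0, 1, 0, 0, 0;
     0, 0, 0, 1, 0, 0;
     -1, 0, 0, 0, -A00, -A01;
     0, -1, 0, 0, -A10, -A11;
     0, 0, A00, A10, 0, 0;
     0, 0, A01, A11, 0, 0]

lemma vec6_zero (a b c d e f : ℝ) : (![a,b,c,d,e,f] : Fin 6 → ℝ) 0 = a := rfl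
lemma vec6_one (a b c d e f : ℝ) : (![a,b,c,d,e,f] : Fin 6 → ℝ) 1 = b := rfl
lemma vec6_two (a b c d e f : ℝ) : (![a,b,c,d,e,f] : Fin 6 → ℝ) 2 = c := rfl
lemma vec6_three (a b c d e f : ℝ) : (![a,b,c,d,e,f] : Fin 6 → ℝ) 3 = d := rfl
lemma vec6_four (a b c d e f : ℝ) : (![a,b,c,d,e,f] : Fin 6 → ℝ) 4 = e := rfl
lemma vec6_five (a b c d e f : ℝ) : (![a,b,c,d,e,f] : Fin 6 → ℝ) 5 = f := rfl

lemma proj_hasFDerivAt (i : Fin 6) (x : EuclideanSpace ℝ (Fin 6)) :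
    HasFDerivAt (fun W : EuclideanSpace ℝ (Fin 6) => W i)
      (EuclideanSpace.proj (𝕜 := ℝ) i) x :=
  (EuclideanSpace.proj (𝕜 := ℝ) (i : Fin 6)).hasFDerivAt (x := x)

lemma grad_G1 (μ : ℝ) (Z : Fin 6 → ℝ) :
    gradient (G1fun μ) (toE6 Z) =
      toE6 ![-(2*(1+μ)*((1+μ)*Z 0 + μ)), -(2*(1+μ)*((1+μ)*Z 1)), 0, 0, 2*Z 4, 0] := by
  apply HasGradientAt.gradient
  rw [hasGradientAt_iff_hasFDerivAt]
  have h0 := proj_hasFDerivAt 0 (toE6 Z)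
  have h1 := proj_hasFDerivAt 1 (toE6 Z)
  have h4 := proj_hasFDerivAt 4 (toE6 Z)
  have he := ((h0.const_mul (1+μ)).add_const μ)
  have hf := (h1.const_mul (1+μ))
  have H := (h4.mul h4).sub ((he.mul he).add (hf.mul hf))
  have hfun : G1fun μ = fun W : EuclideanSpace ℝ (Fin 6) =>
      W 4 * W 4 - (((1+μ) * W 0 + μ) * ((1+μ) * W 0 + μ) +
        ((1+μ) * W 1) * ((1+μ) * W 1)) := by
    funext W
    simp [G1fun, WithLp.equiv_apply]
    ring
  rw [hfun]
  refine H.congr_fderiv ?_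
  ext v
  simp [toE6, InnerProductSpace.toDual_apply_apply, PiLp.inner_apply, Fin.sum_univ_six,
    WithLp.equiv_symm_apply, PiLp.toLp_apply, vec6_zero, vec6_one, vec6_two, vec6_three, vec6_four, vec6_five]
  ring

lemma grad_G2 (μ : ℝ) (Z : Fin 6 → ℝ) :
    gradient (G2fun μ) (toE6 Z) =
      toE6 ![-(2*(1+μ)*((1+μ)*Z 0 - 1)), -(2*(1+μ)*((1+μ)*Z 1)), 0, 0, 0, 2*Z 5] := by
  apply HasGradientAt.gradient
  rw [hasGradientAt_iff_hasFDerivAt]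
  have h0 := proj_hasFDerivAt 0 (toE6 Z)
  have h1 := proj_hasFDerivAt 1 (toE6 Z)
  have h5 := proj_hasFDerivAt 5 (toE6 Z)
  have he := ((h0.const_mul (1+μ)).sub_const 1)
  have hf := (h1.const_mul (1+μ))
  have H := (h5.mul h5).sub ((he.mul he).add (hf.mul hf))
  have hfun : G2fun μ = fun W : EuclideanSpace ℝ (Fin 6) =>
      W 5 * W 5 - (((1+μ) * W 0 - 1) * ((1+μ) * W 0 - 1) +
        ((1+μ) * W 1) * ((1+μ) * W 1)) := by
    funext W
    simp [G2fun, WithLp.equiv_apply]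
    ring
  rw [hfun]
  refine H.congr_fderiv ?_
  ext v
  simp [toE6, InnerProductSpace.toDual_apply_apply, PiLp.inner_apply, Fin.sum_univ_six,
    WithLp.equiv_symm_apply, PiLp.toLp_apply, vec6_zero, vec6_one, vec6_two, vec6_three, vec6_four, vec6_five]
  ring

/-- `G₁` and `G₂` are Casimir functions of the extended Poisson structure:
their gradients are annihilated by the structure matrix `J(Z)`. -/
theorem casimir_gradients_annihilated (μ : ℝ) (hμ : 0 < μ) (Z : Fin 6 → ℝ)
    (hR1 : Z 4 ≠ 0) (hR2 : Z 5 ≠ 0)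
    (hG1 : G1fun μ (toE6 Z) = 0) (hG2 : G2fun μ (toE6 Z) = 0) :
    Jstruct μ Z *ᵥ (WithLp.equiv 2 (Fin 6 → ℝ) (gradient (G1fun μ) (toE6 Z))) = 0
    ∧ Jstruct μ Z *ᵥ (WithLp.equiv 2 (Fin 6 → ℝ) (gradient (G2fun μ) (toE6 Z))) = 0 := by
  constructor
  · rw [grad_G1]
    show Jstruct μ Z *ᵥ ![-(2*(1+μ)*((1+μ)*Z 0 + μ)), -(2*(1+μ)*((1+μ)*Z 1)), 0, 0, 2*Z 4, 0] = 0
    simp only [Jstruct, Matrix.cons_mulVec, Matrix.cons_dotProduct, Matrix.dotProduct_of_isEmpty,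
      Matrix.cons_eq_zero_iff, Matrix.head_cons, Matrix.tail_cons, Matrix.empty_mulVec]
    refine ⟨?_, ?_, ?_, ?_, ?_, ?_, Subsingleton.elim _ _⟩ <;> (try field_simp) <;> ring
  · rw [grad_G2]
    show Jstruct μ Z *ᵥ ![-(2*(1+μ)*((1+μ)*Z 0 - 1)), -(2*(1+μ)*((1+μ)*Z 1)), 0, 0, 0, 2*Z 5] = 0
    simp only [Jstruct, Matrix.cons_mulVec, Matrix.cons_dotProduct, Matrix.dotProduct_of_isEmpty,
      Matrix.cons_eq_zero_iff, Matrix.head_cons, Matrix.tail_cons, Matrix.empty_mulVec]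
    refine ⟨?_, ?_, ?_, ?_, ?_, ?_, Subsingleton.elim _ _⟩ <;> (try field_simp) <;> ring
end

section
/- The 6×6 matrix J(Z) = [[0, Id_2, 0],[-Id_2, 0, -A],[0, Aᵀ, 0]] has rank 4 whenever the 2×2 matrix A is invertible. -/
set_option maxHeartbeats 1600000


open Matrix

private lemma cons_val_five' {α : Type*} {m : ℕ} (x : α)
    (u : Fin m.succ.succ.succ.succ.succ → α) :
    Matrix.vecCons x u 5 = Matrix.vecHead (Matrix.vecTail (Matrix.vecTail
      (Matrix.vecTail (Matrix.vecTail u)))) :=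
  rfl

/-- The 6×6 block matrix `J = [[0, Id, 0],[-Id, 0, -A],[0, Aᵀ, 0]]` has rank 4
whenever the 2×2 matrix `A` is invertible. -/
theorem Jblock_rank_four (A : Matrix (Fin 2) (Fin 2) ℝ) (hA : IsUnit A) :
    (!![0, 0, 1, 0, 0, 0;
        0, 0, 0, 1, 0, 0;
        -1, 0, 0, 0, -(A 0 0), -(A 0 1);
        0, -1, 0, 0, -(A 1 0), -(A 1 1);
        0, 0, A 0 0, A 1 0, 0, 0;
        0, 0, A 0 1, A 1 1, 0, 0] : Matrix (Fin 6) (Fin 6) ℝ).rank = 4 := by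
  set J : Matrix (Fin 6) (Fin 6) ℝ :=
    !![0, 0, 1, 0, 0, 0;
        0, 0, 0, 1, 0, 0;
        -1, 0, 0, 0, -(A 0 0), -(A 0 1);
        0, -1, 0, 0, -(A 1 0), -(A 1 1);
        0, 0, A 0 0, A 1 0, 0, 0;
        0, 0, A 0 1, A 1 1, 0, 0] with hJ
  set L : Matrix (Fin 6) (Fin 6) ℝ :=
    !![0, 0, -1, 0, 0, 0;
       0, 0, 0, -1, 0, 0;
       1, 0, 0, 0, 0, 0;
       0, 1, 0, 0, 0, 0;
       -(A 0 0), -(A 1 0), 0, 0, 1, 0;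
       -(A 0 1), -(A 1 1), 0, 0, 0, 1] with hL
  set Linv : Matrix (Fin 6) (Fin 6) ℝ :=
    !![0, 0, 1, 0, 0, 0;
       0, 0, 0, 1, 0, 0;
       -1, 0, 0, 0, 0, 0;
       0, -1, 0, 0, 0, 0;
       0, 0, A 0 0, A 1 0, 1, 0;
       0, 0, A 0 1, A 1 1, 0, 1] with hLinv
  set Q : Matrix (Fin 6) (Fin 6) ℝ :=
    !![1, 0, 0, 0, -(A 0 0), -(A 0 1);
       0, 1, 0, 0, -(A 1 0), -(A 1 1);
       0, 0, 1, 0, 0, 0;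
       0, 0, 0, 1, 0, 0;
       0, 0, 0, 0, 1, 0;
       0, 0, 0, 0, 0, 1] with hQ
  set Qinv : Matrix (Fin 6) (Fin 6) ℝ :=
    !![1, 0, 0, 0, A 0 0, A 0 1;
       0, 1, 0, 0, A 1 0, A 1 1;
       0, 0, 1, 0, 0, 0;
       0, 0, 0, 1, 0, 0;
       0, 0, 0, 0, 1, 0;
       0, 0, 0, 0, 0, 1] with hQinv
  have hLQ : L * Linv = 1 := by
    ext i j
    fin_cases i <;> fin_cases j <;>
      simp [hL, hLinv, Matrix.mul_apply, Fin.sum_univ_six, Matrix.one_apply, cons_val_five',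
        Matrix.vecHead, Matrix.vecTail]
  have hQQ : Q * Qinv = 1 := by
    ext i j
    fin_cases i <;> fin_cases j <;>
      simp [hQ, hQinv, Matrix.mul_apply, Fin.sum_univ_six, Matrix.one_apply, cons_val_five',
        Matrix.vecHead, Matrix.vecTail]
  have hLdet : IsUnit L.det := by
    have : Invertible L := invertibleOfRightInverse L Linv hLQ
    exact Matrix.isUnit_det_of_invertible L
  have hQdet : IsUnit Q.det := by
    have : Invertible Q := invertibleOfRightInverse Q Qinv hQQ
    exact Matrix.isUnit_det_of_invertible Q
  have key : L * (J * Q) = Matrix.diagonal ![1, 1, 1, 1, 0, 0] := by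
    ext i j
    fin_cases i <;> fin_cases j <;>
      simp [hL, hJ, hQ, Matrix.mul_apply, Fin.sum_univ_six, Matrix.diagonal, cons_val_five',
        Matrix.vecHead, Matrix.vecTail] <;> ring
  have h1 : J.rank = (Matrix.diagonal ![(1:ℝ), 1, 1, 1, 0, 0]).rank := by
    rw [← key, Matrix.rank_mul_eq_right_of_isUnit_det L (J * Q) hLdet,
      Matrix.rank_mul_eq_left_of_isUnit_det Q J hQdet]
  rw [h1, Matrix.rank_diagonal]
  have hiff : ∀ i : Fin 6, (![(1:ℝ), 1, 1, 1, 0, 0]) i ≠ 0 ↔ (i : ℕ) < 4 := by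
    intro i
    fin_cases i <;>
      simp [cons_val_five', Matrix.vecHead, Matrix.vecTail]
  rw [Fintype.card_congr (Equiv.subtypeEquivRight hiff)]
  decide
end

section
/- The system of polynomial equations in (β², μ, e): { 1 + β⁴(1+μ) + 2β²(μ-1)(-1 - 2eμ + μ²) + μ(-1 - 2e(μ-1)(1+μ²) + μ(-1 + μ(-1 + (μ-1)μ))) = 0 , μ(1 + 3β² + (μ-1)μ)(μ²-1) + e(β⁶ + μ²(-1 + μ - μ²) + β⁴(2 + μ(2μ-3)) + β²(1 + μ(-1 + μ(-1 + (μ-1)μ)))) = 0 } with μ > 0, β² > 0 (β ≠ 0), e ∈ ℝ has exactly the solutions (β² = -1 + μ - μ², e = (1+μ)/(1-μ)) and (β² = 1, μ = 1) — and in particular the first family forces β² = -1 + μ - μ² ≤ 0 for real μ, so it admits no solution with β² > 0 and μ > 0. -/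
/-- The system of polynomial conditions arising from the logarithm coefficient
`g₂` (real and imaginary part), in the variables `b = β²`, `μ`, `e` with
`b > 0`, `μ > 0`, has exactly the solutions
`(b = -1 + μ - μ², e = (1+μ)/(1-μ))` and `(b = 1, μ = 1)`; in particular the
first family forces `b = -1 + μ - μ² ≤ 0`, so it admits no solution with
`b > 0` and `μ > 0`. -/
theorem log_coefficient_vanishing_solutions :
    (∀ b μ e : ℝ, 0 < b → 0 < μ →
      ((1 + b ^ 2 * (1 + μ) + 2 * b * (-1 + μ) * (-1 - 2 * e * μ + μ ^ 2)
          + μ * (-1 - 2 * e * (-1 + μ) * (1 + μ ^ 2)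
            + μ * (-1 + μ * (-1 + (-1 + μ) * μ))) = 0
        ∧ μ * (1 + 3 * b + (-1 + μ) * μ) * (-1 + μ ^ 2)
          + e * (b ^ 3 + μ ^ 2 * (-1 + μ - μ ^ 2) + b ^ 2 * (2 + μ * (-3 + 2 * μ))
            + b * (1 + μ * (-1 + μ * (-1 + (-1 + μ) * μ)))) = 0)
      ↔ ((b = -1 + μ - μ ^ 2 ∧ e = (1 + μ) / (1 - μ)) ∨ (b = 1 ∧ μ = 1))))
    ∧ ∀ μ : ℝ, -1 + μ - μ ^ 2 ≤ 0 := by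
  constructor
  · intro b μ e hb hμ
    constructor
    · rintro ⟨h1, h2⟩
      have key : (b + 1 - μ + μ ^ 2) * (1 + μ) * (b + 1) * (b + μ ^ 2) *
          ((b + 1 - 3 * μ + μ ^ 2) ^ 2 + 4 * μ * (1 - μ) ^ 2) = 0 := by
        linear_combination
          (b ^ 3 + μ ^ 2 * (-1 + μ - μ ^ 2) + b ^ 2 * (2 + μ * (-3 + 2 * μ))
            + b * (1 + μ * (-1 + μ * (-1 + (-1 + μ) * μ)))) * h1
          - (-4 * b * μ * (μ - 1) - 2 * μ * (μ - 1) * (μ ^ 2 + 1)) * h2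
      have hP1 : 0 < b + 1 - μ + μ ^ 2 := by nlinarith [sq_nonneg (2 * μ - 1)]
      have hP2 : (0:ℝ) < 1 + μ := by linarith
      have hP3 : 0 < b + 1 := by linarith
      have hP4 : 0 < b + μ ^ 2 := by positivity
      have h5 : (b + 1 - 3 * μ + μ ^ 2) ^ 2 + 4 * μ * (1 - μ) ^ 2 = 0 := by
        by_contra h
        have hg : 0 < (b + 1 - 3 * μ + μ ^ 2) ^ 2 + 4 * μ * (1 - μ) ^ 2 := by
          rcases lt_or_eq_of_le (by positivity :
            (0:ℝ) ≤ (b + 1 - 3 * μ + μ ^ 2) ^ 2 + 4 * μ * (1 - μ) ^ 2) with h' | h'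
          · exact h'
          · exact absurd h'.symm h
        have hpos := mul_pos (mul_pos (mul_pos (mul_pos hP1 hP2) hP3) hP4) hg
        exact absurd key (ne_of_gt hpos)
      have h6 : (1 - μ) ^ 2 = 0 := by
        have h7 : (1 - μ) ^ 2 ≤ 0 := by nlinarith [sq_nonneg (b + 1 - 3 * μ + μ ^ 2)]
        exact le_antisymm h7 (sq_nonneg _)
      have hμ1 : μ = 1 := by
        have := pow_eq_zero_iff (n := 2) (by norm_num) |>.mp h6
        linarith
      subst hμ1
      have h8 : (b - 1) ^ 2 = 0 := by nlinarith
      have hb1 : b = 1 := by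
        have := pow_eq_zero_iff (n := 2) (by norm_num) |>.mp h8
        linarith
      exact Or.inr ⟨hb1, rfl⟩
    · rintro (⟨hb1, _⟩ | ⟨hb1, hμ1⟩)
      · exfalso
        rw [hb1] at hb
        nlinarith [sq_nonneg (2 * μ - 1)]
      · subst hb1; subst hμ1
        constructor <;> ring
  · intro μ
    nlinarith [sq_nonneg (2 * μ - 1)]
end
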